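/- Let a1 > a2 and b1 > b2 be real numbers and set a = a1 − a2, b = b1 − b2. Then the set of eigenvalue gaps {γ1 − γ2 : M = diag(a1, a2) + Q·diag(b1, b2)·Qᵀ, Q ∈ SO(2)}, where γ1 ≥ γ2 are the eigenvalues of M, is exactly the closed interval [|a − b|, a + b]. -/

import Mathlib

open Polynomial Matrix

set_option maxHeartbeats 800000

lemma charpoly_fin_two' (M : Matrix (Fin 2) (Fin 2) ℝ) :
    M.charpoly = X^2 - C (M.trace) * X + C M.det := by
  rw [Matrix.charpoly, Matrix.det_fin_two]
  simp [Matrix.charmatrix_apply_eq, Matrix.charmatrix_apply_ne, Matrix.trace_fin_two,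
    Matrix.det_fin_two]
  ring

lemma prod_expand' (γ1 γ2 : ℝ) :
    (X - C γ1) * (X - C γ2) = X^2 - C (γ1 + γ2) * X + C (γ1 * γ2) := by
  simp only [C_add, C_mul]; ring

lemma coeff_extract' (T D u v : ℝ)
    (hchar : X ^ 2 - C T * X + C D = X ^ 2 - C (u + v) * X + C (u * v)) :
    T = u + v ∧ D = u * v := by
  have h1 := congrArg (fun P => P.coeff 1) hchar
  have h0 := congrArg (fun P => P.coeff 0) hchar
  simp at h1 h0
  exact ⟨by linarith, by linarith⟩

/-- For `a1 > a2`, `b1 > b2`, with `a = a1 − a2` and `b = b1 − b2`, the set of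
eigenvalue gaps `γ1 − γ2` of matrices `M = diag(a1, a2) + Q·diag(b1, b2)·Qᵀ` with `Q ∈ SO(2)`
is exactly the closed interval `[|a − b|, a + b]`. -/
theorem eigenvalue_gap_range (a1 a2 b1 b2 : ℝ) (ha : a2 < a1) (hb : b2 < b1) :
    {g : ℝ | ∃ (Q : Matrix (Fin 2) (Fin 2) ℝ) (γ1 γ2 : ℝ),
        Qᵀ * Q = 1 ∧ Q.det = 1 ∧ γ2 ≤ γ1 ∧
        (!![a1, 0; 0, a2] + Q * !![b1, 0; 0, b2] * Qᵀ).charpoly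
          = (X - Polynomial.C γ1) * (X - Polynomial.C γ2) ∧
        g = γ1 - γ2} =
      Set.Icc |(a1 - a2) - (b1 - b2)| ((a1 - a2) + (b1 - b2)) := by
  have ha' : (0:ℝ) < a1 - a2 := by linarith
  have hb' : (0:ℝ) < b1 - b2 := by linarith
  ext g
  simp only [Set.mem_setOf_eq, Set.mem_Icc]
  constructor
  · rintro ⟨Q, γ1, γ2, hQ, hdet, hle, hchar, rfl⟩
    have e00 := congrFun (congrFun hQ 0) 0
    have e01 := congrFun (congrFun hQ 0) 1
    have e11 := congrFun (congrFun hQ 1) 1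
    simp [Matrix.mul_apply, Fin.sum_univ_two, Matrix.one_apply] at e00 e01 e11
    rw [Matrix.det_fin_two] at hdet
    have hs : Q 1 1 = Q 0 0 := by
      have h1 : (Q 1 1 - Q 0 0)^2 = 0 := by nlinarith [sq_nonneg (Q 0 1 + Q 1 0)]
      have := pow_eq_zero_iff (n := 2) (by norm_num) |>.mp h1
      linarith
    have hq2 : Q 0 1 = - Q 1 0 := by
      have h1 : (Q 0 1 + Q 1 0)^2 = 0 := by nlinarith [sq_nonneg (Q 1 1 - Q 0 0)]
      have := pow_eq_zero_iff (n := 2) (by norm_num) |>.mp h1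
      linarith
    have e00' : (Q 0 0)^2 + (Q 1 0)^2 = 1 := by nlinarith [e00]
    rw [charpoly_fin_two', prod_expand'] at hchar
    obtain ⟨hA0, hB0⟩ := coeff_extract' _ _ _ _ hchar
    have hA : γ1 + γ2 = a1 + a2 + b1 + b2 := by
      rw [← hA0]
      simp [Matrix.trace_fin_two, Matrix.mul_apply, Fin.sum_univ_two, hs, hq2]
      linear_combination (b1 + b2) * e00'
    have hB : γ1 * γ2 = (a1 + (Q 0 0)^2*b1 + (Q 1 0)^2*b2) * (a2 + (Q 1 0)^2*b1 + (Q 0 0)^2*b2)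
        - (Q 0 0)^2*(Q 1 0)^2*(b1 - b2)^2 := by
      rw [← hB0]
      simp [Matrix.det_fin_two, Matrix.mul_apply, Fin.sum_univ_two, hs, hq2]
      ring
    have hgap : (γ1 - γ2)^2 = (a1-a2)^2 + (b1-b2)^2
        + 2*(a1-a2)*(b1-b2)*((Q 0 0)^2 - (Q 1 0)^2) := by
      linear_combination (γ1 + γ2 + (a1+a2+b1+b2)) * hA - 4 * hB
        - (4*b1*b2*(1 + (Q 0 0)^2 + (Q 1 0)^2) + 2*(a1+a2)*(b1+b2)) * e00'
    have hge : 0 ≤ γ1 - γ2 := by linarith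
    constructor
    · have h2 : ((a1-a2) - (b1-b2))^2 ≤ (γ1 - γ2)^2 := by
        nlinarith [mul_nonneg (mul_nonneg ha'.le hb'.le) (sq_nonneg (Q 0 0))]
      have h3 := Real.sqrt_le_sqrt h2
      rwa [Real.sqrt_sq_eq_abs, Real.sqrt_sq hge] at h3
    · have h2 : (γ1 - γ2)^2 ≤ ((a1-a2) + (b1-b2))^2 := by
        nlinarith [mul_nonneg (mul_nonneg ha'.le hb'.le) (sq_nonneg (Q 1 0))]
      have h3 := Real.sqrt_le_sqrt h2
      rwa [Real.sqrt_sq hge, Real.sqrt_sq (by linarith)] at h3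
  · rintro ⟨hg1, hg2⟩
    have hg0 : 0 ≤ g := le_trans (abs_nonneg _) hg1
    have hab : (0:ℝ) < 2*(a1-a2)*(b1-b2) := by positivity
    set t : ℝ := (g^2 - (a1-a2)^2 - (b1-b2)^2) / (2*(a1-a2)*(b1-b2)) with htdef
    have hgt : g^2 = (a1-a2)^2 + (b1-b2)^2 + 2*(a1-a2)*(b1-b2)*t := by
      rw [htdef]; field_simp; ring
    have hl : ((a1-a2) - (b1-b2))^2 ≤ g^2 := by
      nlinarith [abs_nonneg ((a1-a2) - (b1-b2)), sq_abs ((a1-a2) - (b1-b2))]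
    have hu : g^2 ≤ ((a1-a2) + (b1-b2))^2 := by nlinarith
    have ht1 : -1 ≤ t := by rw [htdef, le_div_iff₀ hab]; nlinarith
    have ht2 : t ≤ 1 := by rw [htdef, div_le_iff₀ hab]; nlinarith
    set p : ℝ := Real.sqrt ((1+t)/2) with hpdef
    set r : ℝ := Real.sqrt ((1-t)/2) with hrdef
    have hp2 : p^2 = (1+t)/2 := Real.sq_sqrt (by linarith)
    have hr2 : r^2 = (1-t)/2 := Real.sq_sqrt (by linarith)
    have hT : !![p, -r; r, p]ᵀ = !![p, r; -r, p] := by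
      ext i j; fin_cases i <;> fin_cases j <;> rfl
    refine ⟨!![p, -r; r, p], ((a1+a2+b1+b2)+g)/2, ((a1+a2+b1+b2)-g)/2, ?_, ?_,
      by linarith, ?_, by ring⟩
    · rw [hT]
      ext i j
      fin_cases i <;> fin_cases j <;>
        simp [Matrix.mul_apply, Fin.sum_univ_two, Matrix.one_apply] <;>
        nlinarith [hp2, hr2]
    · rw [Matrix.det_fin_two]
      simp
      nlinarith [hp2, hr2]
    · rw [hT, charpoly_fin_two', prod_expand']
      have h1 : (!![a1, 0; 0, a2] + !![p, -r; r, p] * !![b1, 0; 0, b2] * !![p, r; -r, p]).trace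
          = ((a1+a2+b1+b2)+g)/2 + ((a1+a2+b1+b2)-g)/2 := by
        simp [Matrix.trace_fin_two, Matrix.mul_apply, Fin.sum_univ_two]
        linear_combination (b1 + b2) * hp2 + (b1 + b2) * hr2
      have h2 : (!![a1, 0; 0, a2] + !![p, -r; r, p] * !![b1, 0; 0, b2] * !![p, r; -r, p]).det
          = (((a1+a2+b1+b2)+g)/2) * (((a1+a2+b1+b2)-g)/2) := by
        rw [Matrix.det_fin_two]
        simp [Matrix.mul_apply, Fin.sum_univ_two]
        linear_combination
          ((b1*a2 + b2*a1) + b1*b2*(p^2 + (1+t)/2) + 2*b1*b2*r^2) * hp2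
          + ((b2*a2 + b1*a1) + b1*b2*(r^2 + (1-t)/2) + 2*b1*b2*(1+t)/2) * hr2
          + (1/4) * hgt
      rw [h1, h2]
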